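/- For every fighting fish F, the nonempty prefixes of F with latitude 0 are exactly the prefixes E, E², …, E^{jaw(F)} and F itself; in particular ℓ(F) = jaw(F) + 1. -/

import Mathlib

/-- The four-letter alphabet of steps. -/
inductive Letter : Type
  | E | N | W | S
deriving DecidableEq, Repr

open Letter

/-- Fighting fish: words obtainable from `ENWS` by upper, lower and double gluings. -/
inductive IsFF : List Letter → Prop
  | base : IsFF [E, N, W, S]
  | upper (u v : List Letter) :
      IsFF (u ++ [W] ++ v) → IsFF (u ++ [N, W, S] ++ v)
  | lower (u v : List Letter) :
      IsFF (u ++ [N] ++ v) → IsFF (u ++ [E, N, W] ++ v)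
  | double (u v : List Letter) :
      IsFF (u ++ [W, N] ++ v) → IsFF (u ++ [N, W] ++ v)

/-- Generalized fighting fish: words obtainable from the empty word by the
operations `∇_k` (replace `N^k` by `E N^k W`) and `△_k` (replace `W^k` by `N W^k S`),
for `k ≥ 0`. -/
inductive IsGFF : List Letter → Prop
  | base : IsGFF []
  | nabla (u v : List Letter) (k : ℕ) :
      IsGFF (u ++ List.replicate k N ++ v) →
      IsGFF (u ++ [E] ++ List.replicate k N ++ [W] ++ v)
  | delta (u v : List Letter) (k : ℕ) :
      IsGFF (u ++ List.replicate k W ++ v) →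
      IsGFF (u ++ [N] ++ List.replicate k W ++ [S] ++ v)

/-- The latitude of a word: number of `N`'s minus number of `S`'s. -/
def lat (w : List Letter) : ℤ := (w.count N : ℤ) - (w.count S : ℤ)

/-- The longitude of a word: number of `E`'s minus number of `W`'s. -/
def long (w : List Letter) : ℤ := (w.count E : ℤ) - (w.count W : ℤ)

/-- The size of a word: half its length. -/
def size (w : List Letter) : ℕ := w.length / 2

/-- The lengths of the nonempty prefixes of `w` with latitude 0, in increasing order. -/
def zeroPrefixLengths (w : List Letter) : List ℕ :=
  ((List.range w.length).map (· + 1)).filter (fun m => decide (lat (w.take m) = 0))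

/-- `ℓ(w)`: the number of nonempty prefixes of `w` (including `w` itself) with latitude 0. -/
def ell (w : List Letter) : ℕ := (zeroPrefixLengths w).length

/-- The length of the `i`-th shortest prefix of `w` with latitude 0
(the 0-th such prefix being the empty one). -/
def zeroPrefixLen (w : List Letter) (i : ℕ) : ℕ := (0 :: zeroPrefixLengths w).getD i 0

/-- The `i`-augmentation `✠_i(w)`: writing `w = G_i · H` where `G_i` is the `i`-th
shortest latitude-0 prefix of `w`, it is `G_i · N · H · S`. -/
def aug (w : List Letter) (i : ℕ) : List Letter :=
  w.take (zeroPrefixLen w i) ++ [Letter.N] ++ w.drop (zeroPrefixLen w i) ++ [Letter.S]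

/-- Concatenation of generalized fighting fish: `F1 ⊕ F2 = F1 · E · F2 · W`. -/
def oplus (w1 w2 : List Letter) : List Letter := w1 ++ [Letter.E] ++ w2 ++ [Letter.W]

/-- The jaw of a word: the length of the maximal initial run of `E`'s. -/
def jaw (w : List Letter) : ℕ := (w.takeWhile (· == Letter.E)).length

/-- The `i`-augmentation of a fighting fish `F = E^{jaw F} · G`:
`✠_i(F) = E^i · N · E^{jaw F − i} · G · S`. -/
def ffAug (w : List Letter) (i : ℕ) : List Letter :=
  List.replicate i Letter.E ++ [Letter.N] ++ List.replicate (jaw w - i) Letter.E ++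
    w.drop (jaw w) ++ [Letter.S]

/-- The concatenation of fighting fish `F1 = E^{jaw F1} · N · R` and `F2 = G · S`:
`F1 ⊙ F2 = E^{jaw F1} · G · R`. -/
def ffConc (w1 w2 : List Letter) : List Letter :=
  List.replicate (jaw w1) Letter.E ++ w2.dropLast ++ w1.drop (jaw w1 + 1)

lemma lat_append (a b : List Letter) : lat (a ++ b) = lat a + lat b := by
  simp [lat, List.count_append]; ring
lemma lat_replicate_E (n : ℕ) : lat (List.replicate n E) = 0 := by
  simp [lat, List.count_replicate]

def FFInv (F : List Letter) : Prop :=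
  N ∈ F ∧ lat F = 0 ∧
    ∀ m, m < F.length → F.take m = List.replicate m E ∨ 0 < lat (F.take m)

lemma ne_replicate_of_mem {l : List Letter} {n : ℕ} {c : Letter} (hc : c ∈ l) (hne : c ≠ E) :
    l ≠ List.replicate n E := by
  intro h; exact hne (List.eq_of_mem_replicate (h ▸ hc))

lemma isFF_inv {F : List Letter} (h : IsFF F) : FFInv F := by
  induction h with
  | base =>
    refine ⟨by simp, by decide, ?_⟩
    intro m hm
    simp only [List.length_cons, List.length_nil] at hm
    interval_cases m <;> simp [lat] <;> decide
  | upper u v _ ih =>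
    obtain ⟨hN, h0, hpos⟩ := ih
    simp only [List.append_assoc] at *
    have hu : u = List.replicate u.length E ∨ 0 < lat u := by
      have := hpos u.length (by simp)
      rwa [List.take_append_of_le_length le_rfl, List.take_length] at this
    have hu0 : 0 ≤ lat u := by
      rcases hu with h | h
      · rw [h]; rw [lat_replicate_E]
      · omega
    refine ⟨by simp, ?_, ?_⟩
    · rw [show ([N,W,S] ++ v : List Letter) = [N,W,S] ++ v from rfl] at *
      rw [lat_append] at h0 ⊢
      rw [lat_append] at h0 ⊢
      rw [show lat [N,W,S] = 0 from by decide, show lat [W] = 0 from by decide] at *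
      omega
    · intro m hm
      simp only [List.length_append, List.length_cons, List.length_nil] at hm
      rcases Nat.lt_or_ge m (u.length + 1) with hc | hc
      · have hm' : m ≤ u.length := by omega
        rw [List.take_append_of_le_length hm']
        have := hpos m (by simp; omega)
        rwa [List.take_append_of_le_length hm'] at this
      · obtain ⟨t, rfl⟩ : ∃ t, m = u.length + t := ⟨m - u.length, by omega⟩
        rw [List.take_length_add_append]
        have ht1 : 1 ≤ t := by omega
        rcases eq_or_lt_of_le ht1 with rfl | ht2
        · right
          rw [show (([N,W,S] ++ v).take 1 : List Letter) = [N] from rfl, lat_append,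
            show lat [N] = 1 from by decide]
          omega
        rcases eq_or_lt_of_le (show 2 ≤ t by omega) with rfl | ht3
        · right
          rw [show (([N,W,S] ++ v).take 2 : List Letter) = [N,W] from rfl, lat_append,
            show lat [N,W] = 1 from by decide]
          omega
        · obtain ⟨s, rfl⟩ : ∃ s, t = 3 + s := ⟨t - 3, by omega⟩
          have hs : s < v.length := by omega
          have e1 : ([N,W,S] ++ v).take (3 + s) = [N,W,S] ++ v.take s := by
            rw [show (3 + s) = ([N,W,S] : List Letter).length + s from rfl, List.take_length_add_append]
          rw [e1]
          have hx := hpos (u.length + (1 + s)) (by simp; omega)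
          rw [List.take_length_add_append,
            show (([W] ++ v).take (1 + s) : List Letter) = [W] ++ v.take s from by
              rw [show (1 + s) = ([W] : List Letter).length + s from rfl, List.take_length_add_append]] at hx
          rcases hx with hx | hx
          · exact absurd hx (ne_replicate_of_mem (c := W) (by simp) (by decide))
          · right
            rw [lat_append, lat_append, show lat [N,W,S] = 0 from by decide] at *
            rw [show lat [W] = 0 from by decide] at hx
            omega
  | lower u v _ ih =>
    obtain ⟨hN, h0, hpos⟩ := ih
    simp only [List.append_assoc] at *
    have hu : u = List.replicate u.length E ∨ 0 < lat u := by
      have := hpos u.length (by simp)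
      rwa [List.take_append_of_le_length le_rfl, List.take_length] at this
    have hu0 : 0 ≤ lat u := by
      rcases hu with h | h
      · rw [h]; rw [lat_replicate_E]
      · omega
    refine ⟨by simp, ?_, ?_⟩
    · rw [lat_append] at h0 ⊢
      rw [lat_append] at h0 ⊢
      rw [show lat [E,N,W] = 1 from by decide]
      rw [show lat [N] = 1 from by decide] at h0
      omega
    · intro m hm
      simp only [List.length_append, List.length_cons, List.length_nil] at hm
      rcases Nat.lt_or_ge m (u.length + 1) with hc | hc
      · have hm' : m ≤ u.length := by omega
        rw [List.take_append_of_le_length hm']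
        have := hpos m (by simp; omega)
        rwa [List.take_append_of_le_length hm'] at this
      · obtain ⟨t, rfl⟩ : ∃ t, m = u.length + t := ⟨m - u.length, by omega⟩
        rw [List.take_length_add_append]
        have ht1 : 1 ≤ t := by omega
        rcases eq_or_lt_of_le ht1 with rfl | ht2
        · rw [show (([E,N,W] ++ v).take 1 : List Letter) = [E] from rfl]
          rcases hu with h | h
          · left; rw [List.replicate_succ', ← h]
          · right
            rw [lat_append, show lat [E] = 0 from by decide]
            omega
        rcases eq_or_lt_of_le (show 2 ≤ t by omega) with rfl | ht3
        · right
          rw [show (([E,N,W] ++ v).take 2 : List Letter) = [E,N] from rfl, lat_append,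
            show lat [E,N] = 1 from by decide]
          omega
        · obtain ⟨s, rfl⟩ : ∃ s, t = 3 + s := ⟨t - 3, by omega⟩
          have hs : s < v.length := by omega
          have e1 : ([E,N,W] ++ v).take (3 + s) = [E,N,W] ++ v.take s := by
            rw [show (3 + s) = ([E,N,W] : List Letter).length + s from rfl, List.take_length_add_append]
          rw [e1]
          have hx := hpos (u.length + (1 + s)) (by simp; omega)
          rw [List.take_length_add_append,
            show (([N] ++ v).take (1 + s) : List Letter) = [N] ++ v.take s from by
              rw [show (1 + s) = ([N] : List Letter).length + s from rfl, List.take_length_add_append]] at hx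
          rcases hx with hx | hx
          · exact absurd hx (ne_replicate_of_mem (c := N) (by simp) (by decide))
          · right
            rw [lat_append, lat_append, show lat [E,N,W] = 1 from by decide]
            rw [lat_append, lat_append, show lat [N] = 1 from by decide] at hx
            omega
  | double u v _ ih =>
    obtain ⟨hN, h0, hpos⟩ := ih
    simp only [List.append_assoc] at *
    have hu : u = List.replicate u.length E ∨ 0 < lat u := by
      have := hpos u.length (by simp)
      rwa [List.take_append_of_le_length le_rfl, List.take_length] at this
    have hu0 : 0 ≤ lat u := by
      rcases hu with h | h
      · rw [h]; rw [lat_replicate_E]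
      · omega
    refine ⟨by simp, ?_, ?_⟩
    · rw [lat_append] at h0 ⊢
      rw [lat_append] at h0 ⊢
      rw [show lat [N,W] = 1 from by decide]
      rw [show lat [W,N] = 1 from by decide] at h0
      omega
    · intro m hm
      simp only [List.length_append, List.length_cons, List.length_nil] at hm
      rcases Nat.lt_or_ge m (u.length + 1) with hc | hc
      · have hm' : m ≤ u.length := by omega
        rw [List.take_append_of_le_length hm']
        have := hpos m (by simp; omega)
        rwa [List.take_append_of_le_length hm'] at this
      · obtain ⟨t, rfl⟩ : ∃ t, m = u.length + t := ⟨m - u.length, by omega⟩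
        rw [List.take_length_add_append]
        have ht1 : 1 ≤ t := by omega
        rcases eq_or_lt_of_le ht1 with rfl | ht2
        · right
          rw [show (([N,W] ++ v).take 1 : List Letter) = [N] from rfl, lat_append,
            show lat [N] = 1 from by decide]
          omega
        · obtain ⟨s, rfl⟩ : ∃ s, t = 2 + s := ⟨t - 2, by omega⟩
          have hs : s < v.length := by omega
          have e1 : ([N,W] ++ v).take (2 + s) = [N,W] ++ v.take s := by
            rw [show (2 + s) = ([N,W] : List Letter).length + s from rfl, List.take_length_add_append]
          rw [e1]
          have hx := hpos (u.length + (2 + s)) (by simp; omega)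
          rw [List.take_length_add_append,
            show (([W,N] ++ v).take (2 + s) : List Letter) = [W,N] ++ v.take s from by
              rw [show (2 + s) = ([W,N] : List Letter).length + s from rfl, List.take_length_add_append]] at hx
          rcases hx with hx | hx
          · exact absurd hx (ne_replicate_of_mem (c := W) (by simp) (by decide))
          · right
            rw [lat_append, lat_append, show lat [N,W] = 1 from by decide]
            rw [lat_append, lat_append, show lat [W,N] = 1 from by decide] at hx
            omega

lemma jaw_cons_E (t : List Letter) : jaw (E :: t) = jaw t + 1 := by
  simp [jaw, List.takeWhile_cons]

lemma take_eq_replicate_le_jaw : ∀ (F : List Letter) (k : ℕ),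
    F.take k = List.replicate k E → k ≤ jaw F
  | _, 0, _ => Nat.zero_le _
  | [], k+1, h => by simp at h
  | a :: t, k+1, h => by
    simp only [List.take_succ_cons, List.replicate_succ, List.cons.injEq] at h
    obtain ⟨rfl, h2⟩ := h
    rw [jaw_cons_E]
    exact Nat.succ_le_succ (take_eq_replicate_le_jaw t k h2)

lemma take_jaw (F : List Letter) : F.take (jaw F) = List.replicate (jaw F) E := by
  have h1 : F.takeWhile (· == E) <+: F := List.takeWhile_prefix _
  have h2 : F.take (jaw F) = F.takeWhile (· == E) := (List.prefix_iff_eq_take.mp h1).symm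
  rw [h2]
  apply List.eq_replicate_iff.mpr
  refine ⟨rfl, fun b hb => ?_⟩
  have := List.mem_takeWhile_imp hb
  simpa using this

lemma jaw_lt_length {F : List Letter} (hN : N ∈ F) : jaw F < F.length := by
  have h1 : jaw F ≤ F.length := (F.takeWhile_prefix _).length_le
  rcases lt_or_eq_of_le h1 with h | h
  · exact h
  · exfalso
    have := take_jaw F
    rw [h, List.take_length] at this
    rw [this] at hN
    exact absurd (List.eq_of_mem_replicate hN) (by decide)

lemma countP_lt_range (j k : ℕ) :
    (List.range k).countP (fun m => decide (m < j)) = min j k := by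
  induction k with
  | zero => simp
  | succ k ih =>
    rw [List.range_succ, List.countP_append, ih, List.countP_cons, List.countP_nil]
    by_cases h : k < j <;> simp [h] <;> omega

/-- For a fighting fish `F`, the nonempty prefixes of `F` with latitude 0 are
exactly `E, E², …, E^{jaw F}` and `F` itself; in particular `ℓ(F) = jaw F + 1`. -/
theorem ff_zero_latitude_prefixes (F : List Letter) (hF : IsFF F) :
    (∀ p : List Letter, p <+: F → p ≠ [] →
      (lat p = 0 ↔
        ((∃ k : ℕ, 1 ≤ k ∧ k ≤ jaw F ∧ p = List.replicate k E) ∨ p = F))) ∧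
    ell F = jaw F + 1 := by
  obtain ⟨hN, h0, hpos⟩ := isFF_inv hF
  have hjl : jaw F < F.length := jaw_lt_length hN
  have part1 : ∀ p : List Letter, p <+: F → p ≠ [] →
      (lat p = 0 ↔ ((∃ k, 1 ≤ k ∧ k ≤ jaw F ∧ p = List.replicate k E) ∨ p = F)) := by
    intro p hp hne
    have hple : p.length ≤ F.length := hp.length_le
    have hpeq : p = F.take p.length := List.prefix_iff_eq_take.mp hp
    constructor
    · intro hl
      rcases eq_or_lt_of_le hple with heq | hlt
      · right; rw [hpeq, heq, List.take_length]
      · rcases hpos p.length hlt with h | h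
        · exact Or.inl ⟨p.length, List.length_pos_iff.mpr hne,
            take_eq_replicate_le_jaw F _ h, hpeq.trans h⟩
        · rw [← hpeq] at h; omega
    · rintro (⟨k, hk1, hkj, rfl⟩ | rfl)
      · exact lat_replicate_E k
      · exact h0
  refine ⟨part1, ?_⟩
  have key : ∀ m, m < F.length →
      ((lat (F.take (m+1)) = 0) ↔ (m < jaw F ∨ m = F.length - 1)) := by
    intro m hm
    constructor
    · intro hl
      have hpre : F.take (m+1) <+: F := List.take_prefix _ _
      have hne : F.take (m+1) ≠ [] := by
        apply List.ne_nil_of_length_pos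
        rw [List.length_take]; omega
      rcases (part1 _ hpre hne).mp hl with ⟨k, hk1, hkj, hk⟩ | hfull
      · have hlk : (F.take (m+1)).length = k := by rw [hk, List.length_replicate]
        rw [List.length_take] at hlk
        omega
      · have := congrArg List.length hfull
        rw [List.length_take] at this
        omega
    · rintro (h | h)
      · have e0 : F.take (m+1) = List.replicate (m+1) E := by
          have e : F.take (m+1) = (F.take (jaw F)).take (m+1) := by
            rw [List.take_take]
            congr 1
            omega
          rw [e, take_jaw, List.take_replicate]
          congr 1
          omega
        rw [e0]
        exact lat_replicate_E _
      · have e1 : m + 1 = F.length := by omega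
        rw [e1, List.take_length]
        exact h0
  have hn : F.length = (F.length - 1) + 1 := by omega
  unfold ell zeroPrefixLengths
  rw [← List.countP_eq_length_filter, List.countP_map]
  rw [List.countP_congr (q := fun m => decide (m < jaw F ∨ m = F.length - 1))
    (fun x hx => by
      simp only [List.mem_range] at hx
      simpa using key x hx)]
  rw [hn, List.range_succ, List.countP_append, List.countP_cons, List.countP_nil]
  simp only [Nat.add_sub_cancel]
  have e2 : (List.range (F.length - 1)).countP
        (fun m => decide (m < jaw F ∨ m = F.length - 1))
      = (List.range (F.length - 1)).countP (fun m => decide (m < jaw F)) := by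
    apply List.countP_congr
    intro x hx
    simp only [List.mem_range] at hx
    simp only [decide_eq_true_eq]
    omega
  rw [e2, countP_lt_range]
  simp only [decide_eq_true_eq, or_true, if_true]
  omega
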